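/- Let $r_1, r_2, r_3 > 0$ and let $l_1, l_2, l_3 > 0$ satisfy $l_i^2 \geq r_j^2 + r_k^2$ for all $\{i,j,k\} = \{1,2,3\}$. Then $(r_1^2-r_2^2)(r_3^2-r_1^2) l_1^2 + (r_2^2-r_3^2)(r_1^2-r_2^2) l_2^2 + (r_3^2-r_1^2)(r_2^2-r_3^2) l_3^2 + l_1^2 l_2^2 l_3^2 > 0$. -/
import Mathlib

theorem key_positivity_ineq
    (r1 r2 r3 l1 l2 l3 : ℝ)
    (hr1 : 0 < r1) (hr2 : 0 < r2) (hr3 : 0 < r3)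
    (hl1 : 0 < l1) (hl2 : 0 < l2) (hl3 : 0 < l3)
    (h1 : l1 ^ 2 ≥ r2 ^ 2 + r3 ^ 2)
    (h2 : l2 ^ 2 ≥ r3 ^ 2 + r1 ^ 2)
    (h3 : l3 ^ 2 ≥ r1 ^ 2 + r2 ^ 2) :
    (r1 ^ 2 - r2 ^ 2) * (r3 ^ 2 - r1 ^ 2) * l1 ^ 2
      + (r2 ^ 2 - r3 ^ 2) * (r1 ^ 2 - r2 ^ 2) * l2 ^ 2
      + (r3 ^ 2 - r1 ^ 2) * (r2 ^ 2 - r3 ^ 2) * l3 ^ 2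
      + l1 ^ 2 * l2 ^ 2 * l3 ^ 2 > 0 := by
  have a1 : 0 < l1 ^ 2 + (r2 ^ 2 - r3 ^ 2) := by nlinarith
  have a2 : 0 < l2 ^ 2 + (r3 ^ 2 - r1 ^ 2) := by nlinarith
  have a3 : 0 < l3 ^ 2 + (r1 ^ 2 - r2 ^ 2) := by nlinarith
  have b1 : 0 < l1 ^ 2 - (r2 ^ 2 - r3 ^ 2) := by nlinarith
  have b2 : 0 < l2 ^ 2 - (r3 ^ 2 - r1 ^ 2) := by nlinarith
  have b3 : 0 < l3 ^ 2 - (r1 ^ 2 - r2 ^ 2) := by nlinarith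
  nlinarith [mul_pos (mul_pos a1 a2) a3, mul_pos (mul_pos b1 b2) b3]
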